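/- Let α > 0 be a constant with the Sheil-Small distortion property, and let f = h + conj∘g ∈ S_H. Then for all z₁, z₂ ∈ 𝔻, setting z = (z₂ − z₁)/(1 − conj(z₁)·z₂), one has ((1−|z|)/(1+|z|))^{α+1}·|h'(z₁)| ≤ |h'(z₂)| ≤ ((1+|z|)/(1−|z|))^{α+1}·|h'(z₁)|. -/

import Mathlib

open Complex Metric Set MeasureTheory Filter

lemma aux_one_add_ne (a z : ℂ) (ha : ‖a‖ < 1) (hz : ‖z‖ < 1) :
    1 + a * z ≠ 0 := by
  intro hzero
  have h1 : ‖a * z‖ = 1 := by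
    have : a * z = -1 := by linear_combination hzero
    simp [this]
  rw [norm_mul] at h1
  have h0a := norm_nonneg a
  have h0z := norm_nonneg z
  nlinarith

lemma aux_mob_lt (a z : ℂ) (ha : ‖a‖ < 1) (hz : ‖z‖ < 1) :
    ‖(z + a) / (1 + (starRingEnd ℂ) a * z)‖ < 1 := by
  have hd : (1 + (starRingEnd ℂ) a * z) ≠ 0 := by
    exact aux_one_add_ne ((starRingEnd ℂ) a) z (by simpa using ha) hz
  have hdpos : 0 < ‖1 + (starRingEnd ℂ) a * z‖ := by
    simpa [norm_pos_iff] using hd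
  rw [norm_div, div_lt_one hdpos]
  have key : Complex.normSq (1 + (starRingEnd ℂ) a * z) - Complex.normSq (z + a)
      = (1 - Complex.normSq a) * (1 - Complex.normSq z) := by
    simp only [Complex.normSq_apply, Complex.add_re, Complex.add_im, Complex.mul_re,
      Complex.mul_im, Complex.one_re, Complex.one_im, Complex.conj_re, Complex.conj_im]
    ring
  have ha2 : Complex.normSq a < 1 := by
    rw [← Complex.sq_norm] at *; nlinarith [norm_nonneg a]
  have hz2 : Complex.normSq z < 1 := by
    rw [← Complex.sq_norm] at *; nlinarith [norm_nonneg z]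
  have hlt : Complex.normSq (z + a) < Complex.normSq (1 + (starRingEnd ℂ) a * z) := by
    nlinarith
  have := Real.sqrt_lt_sqrt (Complex.normSq_nonneg _) hlt
  simpa [Complex.norm_def] using this

lemma aux_mob_deriv (a z : ℂ) (h1 : 1 + (starRingEnd ℂ) a * z ≠ 0) :
    HasDerivAt (fun u => (u + a) / (1 + (starRingEnd ℂ) a * u))
      ((1 - (starRingEnd ℂ) a * a) / (1 + (starRingEnd ℂ) a * z) ^ 2) z := by
  have hnum : HasDerivAt (fun u : ℂ => u + a) 1 z := (hasDerivAt_id z).add_const a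
  have hden : HasDerivAt (fun u : ℂ => 1 + (starRingEnd ℂ) a * u) ((starRingEnd ℂ) a) z := by
    simpa using ((hasDerivAt_id z).const_mul ((starRingEnd ℂ) a)).const_add 1
  have := hnum.div hden h1
  refine this.congr_deriv ?_
  ring

theorem stmt_17 (α : ℝ) (h g f : ℂ → ℂ)
    (hα : 0 < α)
    (hSS : ∀ H₀ G₀ : ℂ → ℂ, AnalyticOnNhd ℂ H₀ (Metric.ball (0:ℂ) 1) → AnalyticOnNhd ℂ G₀ (Metric.ball (0:ℂ) 1) →
      Set.InjOn (fun z => H₀ z + (starRingEnd ℂ) (G₀ z)) (Metric.ball (0:ℂ) 1) →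
      (∀ z ∈ Metric.ball (0:ℂ) 1, ‖deriv G₀ z‖ < ‖deriv H₀ z‖) →
      H₀ 0 = 0 → G₀ 0 = 0 → deriv H₀ 0 = 1 →
      ∀ z ∈ Metric.ball (0:ℂ) 1,
        (1 - ‖z‖) ^ (α-1) / (1 + ‖z‖) ^ (α+1) ≤ ‖deriv H₀ z‖ ∧
        ‖deriv H₀ z‖ ≤ (1 + ‖z‖) ^ (α-1) / (1 - ‖z‖) ^ (α+1))
    (hh : AnalyticOnNhd ℂ h (Metric.ball (0:ℂ) 1)) (hg : AnalyticOnNhd ℂ g (Metric.ball (0:ℂ) 1))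
    (hf : ∀ z, f z = h z + (starRingEnd ℂ) (g z))
    (finj : Set.InjOn f (Metric.ball (0:ℂ) 1))
    (fsp : ∀ z ∈ Metric.ball (0:ℂ) 1, ‖deriv g z‖ < ‖deriv h z‖)
    (h0 : h 0 = 0) (g0 : g 0 = 0) (h'1 : deriv h 0 = 1)
    :
    ∀ z₁ ∈ Metric.ball (0:ℂ) 1, ∀ z₂ ∈ Metric.ball (0:ℂ) 1,
      ((1 - ‖(z₂ - z₁)/(1 - (starRingEnd ℂ) z₁ * z₂)‖) / (1 + ‖(z₂ - z₁)/(1 - (starRingEnd ℂ) z₁ * z₂)‖)) ^ (α+1) * ‖deriv h z₁‖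
          ≤ ‖deriv h z₂‖ ∧
      ‖deriv h z₂‖
          ≤ ((1 + ‖(z₂ - z₁)/(1 - (starRingEnd ℂ) z₁ * z₂)‖) / (1 - ‖(z₂ - z₁)/(1 - (starRingEnd ℂ) z₁ * z₂)‖)) ^ (α+1) * ‖deriv h z₁‖ := by
  intro z₁ hz₁ z₂ hz₂
  have hball : ∀ x : ℂ, x ∈ Metric.ball (0:ℂ) 1 ↔ ‖x‖ < 1 := by
    intro x; simp [Complex.dist_eq]
  have ha1 : ‖z₁‖ < 1 := (hball z₁).mp hz₁
  have ha2 : ‖z₂‖ < 1 := (hball z₂).mp hz₂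
  set A := (starRingEnd ℂ) z₁ with hAdef
  have hAabs : ‖A‖ = ‖z₁‖ := by simp [hAdef]
  have hd1 : 1 - A * z₂ ≠ 0 := by
    have := aux_one_add_ne (-A) z₂ (by simpa [hAabs] using ha1) ha2
    intro hc; apply this; linear_combination hc
  have hd2 : 1 - A * z₁ ≠ 0 := by
    have := aux_one_add_ne (-A) z₁ (by simpa [hAabs] using ha1) ha1
    intro hc; apply this; linear_combination hc
  set w := (z₂ - z₁) / (1 - A * z₂) with hwdef
  have hw : ‖w‖ < 1 := by
    have := aux_mob_lt (-z₁) z₂ (by simpa using ha1) ha2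
    simpa [hwdef, sub_eq_add_neg, ← hAdef] using this
  have hwmem : w ∈ Metric.ball (0:ℂ) 1 := (hball w).mpr hw
  set φ := fun z : ℂ => (z + z₁) / (1 + A * z) with hφdef
  have hden : ∀ z : ℂ, ‖z‖ < 1 → 1 + A * z ≠ 0 := fun z hz =>
    aux_one_add_ne A z (by simpa [hAabs] using ha1) hz
  have hφmem : ∀ z : ℂ, ‖z‖ < 1 → φ z ∈ Metric.ball (0:ℂ) 1 := by
    intro z hz
    exact (hball _).mpr (aux_mob_lt z₁ z ha1 hz)
  have hφ0 : φ 0 = z₁ := by simp [hφdef]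
  have hφw : φ w = z₂ := by
    show (w + z₁) / (1 + A * w) = z₂
    rw [div_eq_iff (hden w hw), hwdef]
    field_simp [show (1:ℂ) - z₂ * A ≠ 0 by rwa [mul_comm]]
    ring
  have hh'ne : deriv h z₁ ≠ 0 := by
    have := fsp z₁ hz₁
    intro hc; rw [hc] at this; simp at this
    exact absurd this (not_lt.mpr (norm_nonneg _))
  set c := (1 - A * z₁) * deriv h z₁ with hcdef
  have hc : c ≠ 0 := mul_ne_zero hd2 hh'ne
  set H₀ := fun z : ℂ => (h (φ z) - h z₁) / c with hH₀def
  set G₀ := fun z : ℂ => (g (φ z) - g z₁) / ((starRingEnd ℂ) c) with hG₀def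
  have hφderiv : ∀ z : ℂ, ‖z‖ < 1 →
      HasDerivAt φ ((1 - A * z₁) / (1 + A * z) ^ 2) z := by
    intro z hz
    exact aux_mob_deriv z₁ z (hden z hz)
  have derivH : ∀ z : ℂ, ‖z‖ < 1 →
      HasDerivAt H₀ (deriv h (φ z) * ((1 - A * z₁) / (1 + A * z) ^ 2) / c) z := by
    intro z hz
    have hdh : HasDerivAt h (deriv h (φ z)) (φ z) :=
      (hh _ (hφmem z hz)).differentiableAt.hasDerivAt
    exact ((hdh.comp z (hφderiv z hz)).sub_const (h z₁)).div_const c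
  have derivG : ∀ z : ℂ, ‖z‖ < 1 →
      HasDerivAt G₀ (deriv g (φ z) * ((1 - A * z₁) / (1 + A * z) ^ 2) / ((starRingEnd ℂ) c)) z := by
    intro z hz
    have hdg : HasDerivAt g (deriv g (φ z)) (φ z) :=
      (hg _ (hφmem z hz)).differentiableAt.hasDerivAt
    exact ((hdg.comp z (hφderiv z hz)).sub_const (g z₁)).div_const _
  have hφan : ∀ z : ℂ, ‖z‖ < 1 → AnalyticAt ℂ φ z := by
    intro z hz
    apply AnalyticAt.div
    · exact analyticAt_id.add analyticAt_const
    · exact analyticAt_const.add (analyticAt_const.mul analyticAt_id)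
    · exact hden z hz
  have hanH : AnalyticOnNhd ℂ H₀ (Metric.ball (0:ℂ) 1) := by
    intro z hz
    exact (((hh _ (hφmem z ((hball z).mp hz))).comp (hφan z ((hball z).mp hz))).sub
      analyticAt_const).div analyticAt_const hc
  have hanG : AnalyticOnNhd ℂ G₀ (Metric.ball (0:ℂ) 1) := by
    intro z hz
    exact (((hg _ (hφmem z ((hball z).mp hz))).comp (hφan z ((hball z).mp hz))).sub
      analyticAt_const).div analyticAt_const (by simpa using hc)
  have hFeq : ∀ u : ℂ, H₀ u + (starRingEnd ℂ) (G₀ u) = (f (φ u) - f z₁) / c := by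
    intro u
    rw [hH₀def, hG₀def, hf, hf]
    simp only [map_div₀, map_sub, Complex.conj_conj]
    ring
  have hFinj : Set.InjOn (fun z => H₀ z + (starRingEnd ℂ) (G₀ z)) (Metric.ball (0:ℂ) 1) := by
    intro x hx y hy hxy
    simp only [hFeq] at hxy
    have hxa : ‖x‖ < 1 := (hball x).mp hx
    have hya : ‖y‖ < 1 := (hball y).mp hy
    have hfeq : f (φ x) = f (φ y) := by
      have h3 := (div_eq_div_iff hc hc).mp hxy
      have h4 := mul_right_cancel₀ hc h3
      linear_combination h4
    have hφeq : φ x = φ y := finj (hφmem x hxa) (hφmem y hya) hfeq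
    have hcross : (x + z₁) * (1 + A * y) = (y + z₁) * (1 + A * x) := by
      have h1 := hden x hxa
      have h2 := hden y hya
      rw [hφdef] at hφeq
      rw [div_eq_div_iff h1 h2] at hφeq
      linear_combination hφeq
    have hzero : (x - y) * (1 - A * z₁) = 0 := by linear_combination hcross
    rcases mul_eq_zero.mp hzero with h' | h'
    · exact sub_eq_zero.mp h'
    · exact absurd h' hd2
  have hsp : ∀ z ∈ Metric.ball (0:ℂ) 1, ‖deriv G₀ z‖ < ‖deriv H₀ z‖ := by
    intro z hz
    have hza : ‖z‖ < 1 := (hball z).mp hz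
    rw [(derivH z hza).deriv, (derivG z hza).deriv]
    simp only [norm_div, norm_mul, Complex.norm_conj]
    have ht : 0 < ‖(1 - A * z₁)‖ / ‖(1 + A * z) ^ 2‖ :=
      div_pos (norm_pos_iff.mpr hd2) (norm_pos_iff.mpr (pow_ne_zero 2 (hden z hza)))
    have hcpos : 0 < ‖c‖ := by simpa [norm_pos_iff] using hc
    have := fsp (φ z) (hφmem z hza)
    gcongr
  have hH00 : H₀ 0 = 0 := by simp [hH₀def, hφ0]
  have hG00 : G₀ 0 = 0 := by simp [hG₀def, hφ0]
  have hH0' : deriv H₀ 0 = 1 := by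
    rw [(derivH 0 (by norm_num)).deriv, hφ0]
    rw [hcdef]
    field_simp
    ring
  obtain ⟨hlow, hup⟩ := hSS H₀ G₀ hanH hanG hFinj hsp hH00 hG00 hH0' w hwmem
  set r := ‖w‖ with hrdef
  have hr0 : 0 ≤ r := norm_nonneg w
  have hr1 : r < 1 := hw
  set D := ‖1 + A * w‖ with hDdef
  have hDpos : 0 < D := by simpa [hDdef, norm_pos_iff] using hden w hw
  have hAw : ‖A * w‖ ≤ r := by
    rw [norm_mul, hAabs]
    exact mul_le_of_le_one_left hr0 (le_of_lt ha1)
  have hD_le : D ≤ 1 + r := by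
    calc D ≤ ‖1‖ + ‖A * w‖ := norm_add_le _ _
    _ ≤ 1 + r := by simpa using hAw
  have hD_ge : 1 - r ≤ D := by
    have h2 := norm_add_le (1 + A * w) (-(A * w))
    simp only [add_neg_cancel_right, norm_one, norm_neg] at h2
    linarith
  have hM : 0 < ‖deriv h z₁‖ := by
    simpa [norm_pos_iff] using hh'ne
  have hEq : ‖deriv h z₂‖
      = ‖deriv H₀ w‖ * D ^ 2 * ‖deriv h z₁‖ := by
    rw [(derivH w hw).deriv, hφw]
    rw [norm_div, norm_mul, norm_div, norm_pow, hcdef, norm_mul]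
    have hB : ‖1 - A * z₁‖ ≠ 0 := norm_ne_zero_iff.mpr hd2
    have hMne : ‖deriv h z₁‖ ≠ 0 := ne_of_gt hM
    have hDne : D ≠ 0 := ne_of_gt hDpos
    rw [hDdef] at *
    field_simp
  have hXnn : 0 ≤ ‖deriv H₀ w‖ := norm_nonneg _
  constructor
  · -- lower bound
    have e2 : ((1 - r) / (1 + r)) ^ (α + 1)
        = (1 - r) ^ (α - 1) / (1 + r) ^ (α + 1) * (1 - r) ^ 2 := by
      rw [Real.div_rpow (by linarith) (by linarith)]
      have h2 : (1 - r) ^ (α + 1) = (1 - r) ^ (α - 1) * (1 - r) ^ 2 := by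
        rw [← Real.rpow_natCast (1 - r) 2, ← Real.rpow_add (by linarith)]
        congr 1
        push_cast
        ring
      rw [h2]; ring
    rw [hEq, e2]
    have key : (1 - r) ^ (α - 1) / (1 + r) ^ (α + 1) * (1 - r) ^ 2
        ≤ ‖deriv H₀ w‖ * D ^ 2 := by
      apply mul_le_mul hlow (pow_le_pow_left₀ (by linarith) hD_ge 2)
        (by positivity) hXnn
    exact mul_le_mul_of_nonneg_right key (le_of_lt hM)
  · -- upper bound
    have e1 : ((1 + r) / (1 - r)) ^ (α + 1)
        = (1 + r) ^ (α - 1) / (1 - r) ^ (α + 1) * (1 + r) ^ 2 := by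
      rw [Real.div_rpow (by linarith) (by linarith)]
      have h2 : (1 + r) ^ (α + 1) = (1 + r) ^ (α - 1) * (1 + r) ^ 2 := by
        rw [← Real.rpow_natCast (1 + r) 2, ← Real.rpow_add (by linarith)]
        congr 1
        push_cast
        ring
      rw [h2]; ring
    rw [hEq, e1]
    have key : ‖deriv H₀ w‖ * D ^ 2
        ≤ (1 + r) ^ (α - 1) / (1 - r) ^ (α + 1) * (1 + r) ^ 2 := by
      apply mul_le_mul hup (pow_le_pow_left₀ (le_of_lt hDpos) hD_le 2)
        (by positivity) (div_nonneg (Real.rpow_nonneg (by linarith) _) (Real.rpow_nonneg (by linarith) _))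
    exact mul_le_mul_of_nonneg_right key (le_of_lt hM)
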